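/- Hemisphere cancellation for the Muskat kernels: For every $\overline{x} \in \mathbb{R}^3$, every radius $r > 0$, and every unit vector $n \in \mathbb{R}^3$, one has $\int_{\{\overline{y} : |\overline{y} - \overline{x}| = r,\ n \cdot (\overline{y} - \overline{x}) \ge 0\}} \frac{(x_1 - y_1)(x_3 - y_3)}{|\overline{x} - \overline{y}|^5}\, d\sigma(\overline{y}) = 0$ and $\int_{\{\overline{y} : |\overline{y} - \overline{x}| = r,\ n \cdot (\overline{y} - \overline{x}) \ge 0\}} \frac{2(x_3-y_3)^2 - (x_1-y_1)^2 - (x_2-y_2)^2}{|\overline{x} - \overline{y}|^5}\, d\sigma(\overline{y}) = 0$, where $\sigma$ is the surface measure on the sphere of radius $r$ centered at $\overline{x}$. -/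

import Mathlib

open MeasureTheory Filter Topology Real Set
open scoped RealInnerProductSpace

noncomputable section

abbrev E3 := EuclideanSpace ℝ (Fin 3)

/-- The surface measure on the sphere of radius `r` centered at `c` in `ℝ³`, obtained from the
surface measure of the unit sphere by the scaling factor `r²` and the affine map `z ↦ c + r • z`. -/
def sphereSurfaceMeasure (c : E3) (r : ℝ) : Measure E3 :=
  ENNReal.ofReal (r ^ 2) •
    Measure.map (fun z : Metric.sphere (0 : E3) 1 => c + r • (z : E3)) volume.toSphere

namespace MuskatAux

/-- Negation of the `j`-th coordinate, as a linear isometry equivalence. -/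
def negCoord (j : Fin 3) : E3 ≃ₗᵢ[ℝ] E3 :=
  { toFun := fun x => WithLp.toLp 2 (fun i => if i = j then -x i else x i)
    invFun := fun x => WithLp.toLp 2 (fun i => if i = j then -x i else x i)
    left_inv := fun x => by ext i; by_cases h : i = j <;> simp [h]
    right_inv := fun x => by ext i; by_cases h : i = j <;> simp [h]
    map_add' := fun x y => by ext i; by_cases h : i = j <;>
      simp [h, PiLp.add_apply, neg_add, add_comm]
    map_smul' := fun c x => by ext i; by_cases h : i = j <;>
      simp [h, PiLp.smul_apply, mul_comm, smul_eq_mul, mul_neg]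
    norm_map' := fun x => by
      simp only [EuclideanSpace.norm_eq]
      congr 1
      refine Finset.sum_congr rfl fun i _ => ?_
      by_cases h : i = j <;> simp [h] }

@[simp] lemma negCoord_apply (j i : Fin 3) (x : E3) :
    negCoord j x i = if i = j then -x i else x i := rfl

/-- Swap of two coordinates, as a linear isometry equivalence. -/
def swapCoord (a b : Fin 3) : E3 ≃ₗᵢ[ℝ] E3 :=
  { toFun := fun x => WithLp.toLp 2 (fun i => x (Equiv.swap a b i))
    invFun := fun x => WithLp.toLp 2 (fun i => x (Equiv.swap a b i))
    left_inv := fun x => by ext i; show x ((Equiv.swap a b) ((Equiv.swap a b) i)) = x i; rw [Equiv.swap_apply_self]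
    right_inv := fun x => by ext i; show x ((Equiv.swap a b) ((Equiv.swap a b) i)) = x i; rw [Equiv.swap_apply_self]
    map_add' := fun x y => by ext i; simp [PiLp.add_apply]
    map_smul' := fun c x => by ext i; simp [PiLp.smul_apply]
    norm_map' := fun x => by
      simp only [EuclideanSpace.norm_eq]
      congr 1
      exact Equiv.sum_comp (Equiv.swap a b) (fun i => ‖x i‖ ^ 2) }

@[simp] lemma swapCoord_apply (a b i : Fin 3) (x : E3) :
    swapCoord a b x i = x (Equiv.swap a b i) := rfl

end MuskatAux

open scoped Pointwise

namespace MuskatAux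

/-- A linear isometry equivalence restricted to the unit sphere. -/
def sphMap (e : E3 ≃ₗᵢ[ℝ] E3) (z : Metric.sphere (0 : E3) 1) : Metric.sphere (0 : E3) 1 :=
  ⟨e z.1, by
    rw [mem_sphere_zero_iff_norm, e.norm_map, ← mem_sphere_zero_iff_norm]
    exact z.2⟩

@[simp] lemma coe_sphMap (e : E3 ≃ₗᵢ[ℝ] E3) (z : Metric.sphere (0 : E3) 1) :
    (sphMap e z : E3) = e z.1 := rfl

lemma continuous_sphMap (e : E3 ≃ₗᵢ[ℝ] E3) : Continuous (sphMap e) :=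
  Continuous.subtype_mk (e.continuous.comp continuous_subtype_val) _

lemma coe_image_preimage (e : E3 ≃ₗᵢ[ℝ] E3) (s : Set (Metric.sphere (0 : E3) 1)) :
    (Subtype.val '' (sphMap e ⁻¹' s)) = e.symm '' (Subtype.val '' s) := by
  ext x
  constructor
  · rintro ⟨z, hz, rfl⟩
    exact ⟨e z.1, ⟨sphMap e z, hz, rfl⟩, by simp⟩
  · rintro ⟨y, ⟨w, hw, rfl⟩, rfl⟩
    have hmem : e.symm w.1 ∈ Metric.sphere (0 : E3) 1 := by
      rw [mem_sphere_zero_iff_norm, e.symm.norm_map, ← mem_sphere_zero_iff_norm]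
      exact w.2
    refine ⟨⟨e.symm w.1, hmem⟩, ?_, rfl⟩
    show sphMap e _ ∈ s
    have : sphMap e ⟨e.symm w.1, hmem⟩ = w := by
      apply Subtype.ext
      simp [sphMap]
    rw [this]; exact hw

lemma smul_image_comm (e : E3 ≃ₗᵢ[ℝ] E3) (T : Set E3) :
    (Ioo (0:ℝ) 1) • (e.symm '' T) = e.symm '' ((Ioo (0:ℝ) 1) • T) := by
  ext x
  simp only [Set.mem_smul_set, Set.mem_image]
  constructor
  · rintro ⟨c, hc, y, ⟨t, ht, rfl⟩, rfl⟩
    exact ⟨c • t, ⟨c, hc, t, ht, rfl⟩, by simp [_root_.map_smul]⟩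
  · rintro ⟨y, ⟨c, hc, t, ht, rfl⟩, rfl⟩
    exact ⟨c, hc, e.symm t, ⟨t, ht, rfl⟩, by simp [_root_.map_smul]⟩

lemma volume_image_symm (e : E3 ≃ₗᵢ[ℝ] E3) (U : Set E3) :
    volume (e.symm '' U) = volume U := by
  have h1 : e.symm '' U = e ⁻¹' U := by
    ext x
    constructor
    · rintro ⟨y, hy, rfl⟩; simpa using hy
    · intro h; exact ⟨e x, h, by simp⟩
  rw [h1]
  have hme : Measure.map (⇑(e.toHomeomorph.toMeasurableEquiv)) volume = volume := by
    rw [Homeomorph.toMeasurableEquiv_coe, LinearIsometryEquiv.coe_toHomeomorph]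
    exact (LinearIsometryEquiv.measurePreserving e).map_eq
  calc volume (⇑e ⁻¹' U) = volume (e.toHomeomorph.toMeasurableEquiv ⁻¹' U) := rfl
    _ = Measure.map (⇑(e.toHomeomorph.toMeasurableEquiv)) volume U :=
        (MeasurableEquiv.map_apply _ _).symm
    _ = volume U := by rw [hme]

lemma map_sphMap_toSphere (e : E3 ≃ₗᵢ[ℝ] E3) :
    Measure.map (sphMap e) (volume : Measure E3).toSphere = (volume : Measure E3).toSphere := by
  refine Measure.ext fun s hs => ?_
  rw [Measure.map_apply (continuous_sphMap e).measurable hs,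
    Measure.toSphere_apply' _ hs, Measure.toSphere_apply' _ ((continuous_sphMap e).measurable hs),
    coe_image_preimage, smul_image_comm, volume_image_symm]

end MuskatAux

namespace MuskatAux



lemma integral_sphMap (e : E3 ≃ₗᵢ[ℝ] E3) (f : Metric.sphere (0 : E3) 1 → ℝ)
    (hf : Measurable f) :
    ∫ z, f (sphMap e z) ∂(volume : Measure E3).toSphere = ∫ z, f z ∂(volume : Measure E3).toSphere := by
  have h := map_sphMap_toSphere e
  calc ∫ z, f (sphMap e z) ∂(volume : Measure E3).toSphere
      = ∫ z, f z ∂(Measure.map (sphMap e) (volume : Measure E3).toSphere) :=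
        (integral_map (continuous_sphMap e).aemeasurable
          (by rw [h]; exact hf.aestronglyMeasurable)).symm
    _ = ∫ z, f z ∂(volume : Measure E3).toSphere := by rw [h]

lemma meas_coord (i : Fin 3) : Measurable fun z : Metric.sphere (0 : E3) 1 => (z : E3) i :=
  ((EuclideanSpace.proj i).continuous.comp continuous_subtype_val).measurable

lemma integrable_coords (g : E3 → ℝ) (hg : Continuous g) :
    Integrable (fun z : Metric.sphere (0 : E3) 1 => g (z : E3)) (volume : Measure E3).toSphere := by
  have hc : Continuous fun z : Metric.sphere (0 : E3) 1 => g (z : E3) :=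
    hg.comp continuous_subtype_val
  exact hc.integrable_of_hasCompactSupport ((isClosed_tsupport _).isCompact)

lemma boundary_null (n : E3) (hn : n ≠ 0) :
    (volume : Measure E3).toSphere {z : Metric.sphere (0 : E3) 1 | ⟪n, (z : E3)⟫ = 0} = 0 := by
  have hS : MeasurableSet {z : Metric.sphere (0 : E3) 1 | ⟪n, (z : E3)⟫ = 0} := by
    have : Continuous fun z : Metric.sphere (0 : E3) 1 => ⟪n, (z : E3)⟫ :=
      (continuous_const.inner continuous_subtype_val)
    exact this.measurable (measurableSet_singleton 0)
  rw [Measure.toSphere_apply' _ hS]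
  have hsub : (Ioo (0:ℝ) 1) • (Subtype.val '' {z : Metric.sphere (0 : E3) 1 | ⟪n, (z : E3)⟫ = 0})
      ⊆ ((ℝ ∙ n)ᗮ : Submodule ℝ E3) := by
    rintro x ⟨c, _, y, ⟨w, hw, rfl⟩, rfl⟩
    rw [SetLike.mem_coe, Submodule.mem_orthogonal_singleton_iff_inner_right]
    rw [real_inner_smul_right, hw, mul_zero]
  have hne : (ℝ ∙ n)ᗮ ≠ (⊤ : Submodule ℝ E3) := by
    intro h
    have hmem : n ∈ (ℝ ∙ n)ᗮ := h ▸ Submodule.mem_top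
    rw [Submodule.mem_orthogonal_singleton_iff_inner_right, real_inner_self_eq_norm_sq] at hmem
    exact hn (by simpa using hmem)
  have h0 : volume ((ℝ ∙ n)ᗮ : Set E3) = 0 := Measure.addHaar_submodule _ _ hne
  rw [measure_mono_null hsub h0, mul_zero]

/-- Hemisphere cancellation: an even function with zero mean on the sphere has zero
mean on every hemisphere. -/
lemma hemi_zero (g : E3 → ℝ) (hg : Continuous g) (heven : ∀ x, g (-x) = g x)
    (hzero : ∫ z : Metric.sphere (0 : E3) 1, g (z : E3) ∂(volume : Measure E3).toSphere = 0)
    (n : E3) (hn : n ≠ 0) :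
    ∫ z in {z : Metric.sphere (0 : E3) 1 | 0 ≤ ⟪n, (z : E3)⟫}, g (z : E3) ∂(volume : Measure E3).toSphere = 0 := by
  set A := {z : Metric.sphere (0 : E3) 1 | 0 ≤ ⟪n, (z : E3)⟫} with hA
  have hcont : Continuous fun z : Metric.sphere (0 : E3) 1 => ⟪n, (z : E3)⟫ :=
    continuous_const.inner continuous_subtype_val
  have hAm : MeasurableSet A := hcont.measurable measurableSet_Ici
  have hint : Integrable (fun z : Metric.sphere (0 : E3) 1 => g (z : E3)) (volume : Measure E3).toSphere :=
    integrable_coords g hg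
  -- the antipodal map
  set ψ := sphMap (LinearIsometryEquiv.neg ℝ (E := E3)) with hψ
  have hψcoe : ∀ z, ((ψ z : E3)) = -(z : E3) := fun z => rfl
  -- ∫ over Aᶜ equals ∫ over A' := {0 < ⟪n,z⟫}
  set A' := {z : Metric.sphere (0 : E3) 1 | 0 < ⟪n, (z : E3)⟫} with hA'
  have hA'm : MeasurableSet A' := hcont.measurable measurableSet_Ioi
  have hgm : Measurable fun z : Metric.sphere (0 : E3) 1 => g (z : E3) :=
    (hg.comp continuous_subtype_val).measurable
  have hpre : ψ ⁻¹' Aᶜ = A' := by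
    ext z
    simp only [Set.mem_preimage, Set.mem_compl_iff, hA, hA', Set.mem_setOf_eq, hψcoe,
      inner_neg_right, not_le]
    constructor
    · intro h; linarith
    · intro h; linarith
  have key : ∫ z in Aᶜ, g (z : E3) ∂(volume : Measure E3).toSphere = ∫ z in A', g (z : E3) ∂(volume : Measure E3).toSphere := by
    have h1 : ∫ z in Aᶜ, g (z : E3) ∂(volume : Measure E3).toSphere
        = ∫ z, (Aᶜ).indicator (fun z : Metric.sphere (0 : E3) 1 => g (z : E3)) z ∂(volume : Measure E3).toSphere :=
      (integral_indicator hAm.compl).symm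
    have h2 : ∫ z, (Aᶜ).indicator (fun z : Metric.sphere (0 : E3) 1 => g (z : E3)) z ∂(volume : Measure E3).toSphere
        = ∫ z, (Aᶜ).indicator (fun z : Metric.sphere (0 : E3) 1 => g (z : E3)) (ψ z) ∂(volume : Measure E3).toSphere :=
      (integral_sphMap _ _ (hgm.indicator hAm.compl)).symm
    have h3 : ∀ z, (Aᶜ).indicator (fun z : Metric.sphere (0 : E3) 1 => g (z : E3)) (ψ z)
        = A'.indicator (fun z : Metric.sphere (0 : E3) 1 => g (z : E3)) z := by
      intro z
      by_cases hz : ψ z ∈ Aᶜ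
      · have hz' : z ∈ A' := by rw [← hpre]; exact hz
        rw [Set.indicator_of_mem hz, Set.indicator_of_mem hz', hψcoe, heven]
      · have hz' : z ∉ A' := by rw [← hpre]; exact hz
        rw [Set.indicator_of_notMem hz, Set.indicator_of_notMem hz']
    rw [h1, h2]
    simp_rw [h3]
    exact integral_indicator hA'm
  have hAA' : A' =ᵐ[(volume : Measure E3).toSphere] A := by
    rw [Filter.eventuallyEq_set]
    have hnull : (volume : Measure E3).toSphere {z : Metric.sphere (0 : E3) 1 | ⟪n, (z : E3)⟫ = 0} = 0 := boundary_null n hn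
    have : {z : Metric.sphere (0 : E3) 1 | ¬(z ∈ A' ↔ z ∈ A)}
        ⊆ {z : Metric.sphere (0 : E3) 1 | ⟪n, (z : E3)⟫ = 0} := by
      intro z hz
      simp only [hA, hA', Set.mem_setOf_eq] at hz ⊢
      by_contra h
      rcases lt_or_gt_of_ne h with hlt | hgt
      · exact hz (iff_of_false (not_lt.2 hlt.le) (not_le.2 hlt))
      · exact hz (iff_of_true hgt hgt.le)
    have := measure_mono_null this hnull
    exact (ae_iff (p := fun z => z ∈ A' ↔ z ∈ A)).2 this
  have hsplit : ∫ z in A, g (z : E3) ∂(volume : Measure E3).toSphere + ∫ z in Aᶜ, g (z : E3) ∂(volume : Measure E3).toSphere = 0 := by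
    rw [integral_add_compl hAm hint, hzero]
  rw [key, setIntegral_congr_set hAA'] at hsplit
  linarith

end MuskatAux

namespace MuskatAux

lemma sphere_int_zero1 :
    ∫ z : Metric.sphere (0 : E3) 1, (z : E3) 0 * (z : E3) 2 ∂(volume : Measure E3).toSphere
      = 0 := by
  have h := integral_sphMap (negCoord 2) (fun z => (z : E3) 0 * (z : E3) 2)
    ((meas_coord 0).mul (meas_coord 2))
  simp only [coe_sphMap, negCoord_apply, if_neg (show (0 : Fin 3) ≠ 2 by decide),
    if_pos rfl, eq_self_iff_true, if_true, mul_neg, integral_neg] at h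
  linarith

lemma sq_swap (a b : Fin 3) :
    ∫ z : Metric.sphere (0 : E3) 1, ((z : E3) a) ^ 2 ∂(volume : Measure E3).toSphere
      = ∫ z : Metric.sphere (0 : E3) 1, ((z : E3) b) ^ 2 ∂(volume : Measure E3).toSphere := by
  have h := integral_sphMap (swapCoord a b) (fun z => ((z : E3) a) ^ 2)
    ((meas_coord a).pow_const 2)
  simp only [coe_sphMap, swapCoord_apply] at h
  rw [Equiv.swap_apply_left] at h
  exact h.symm

lemma sphere_int_zero2 :
    ∫ z : Metric.sphere (0 : E3) 1,
      (2 * ((z : E3) 2) ^ 2 - ((z : E3) 0) ^ 2 - ((z : E3) 1) ^ 2)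
      ∂(volume : Measure E3).toSphere = 0 := by
  have hi : ∀ i : Fin 3, Integrable (fun z : Metric.sphere (0 : E3) 1 => ((z : E3) i) ^ 2)
      (volume : Measure E3).toSphere := fun i =>
    integrable_coords (fun x => (x i) ^ 2) (((EuclideanSpace.proj i).continuous).pow 2)
  have h12 : Integrable (fun z : Metric.sphere (0 : E3) 1 =>
      2 * ((z : E3) 2) ^ 2 - ((z : E3) 0) ^ 2) (volume : Measure E3).toSphere :=
    ((hi 2).const_mul 2).sub (hi 0)
  have e1 : ∫ z : Metric.sphere (0 : E3) 1,
        (2 * ((z : E3) 2) ^ 2 - ((z : E3) 0) ^ 2 - ((z : E3) 1) ^ 2)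
        ∂(volume : Measure E3).toSphere
      = (∫ z : Metric.sphere (0 : E3) 1, (2 * ((z : E3) 2) ^ 2 - ((z : E3) 0) ^ 2)
          ∂(volume : Measure E3).toSphere)
        - ∫ z : Metric.sphere (0 : E3) 1, ((z : E3) 1) ^ 2 ∂(volume : Measure E3).toSphere :=
    integral_sub h12 (hi 1)
  have e2 : ∫ z : Metric.sphere (0 : E3) 1, (2 * ((z : E3) 2) ^ 2 - ((z : E3) 0) ^ 2)
        ∂(volume : Measure E3).toSphere
      = (∫ z : Metric.sphere (0 : E3) 1, 2 * ((z : E3) 2) ^ 2 ∂(volume : Measure E3).toSphere)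
        - ∫ z : Metric.sphere (0 : E3) 1, ((z : E3) 0) ^ 2 ∂(volume : Measure E3).toSphere :=
    integral_sub ((hi 2).const_mul 2) (hi 0)
  have e3 : ∫ z : Metric.sphere (0 : E3) 1, 2 * ((z : E3) 2) ^ 2 ∂(volume : Measure E3).toSphere
      = 2 * ∫ z : Metric.sphere (0 : E3) 1, ((z : E3) 2) ^ 2 ∂(volume : Measure E3).toSphere :=
    integral_const_mul 2 _
  rw [e1, e2, e3, sq_swap 0 2, sq_swap 1 2]
  ring

end MuskatAux

namespace MuskatAux

lemma main_reduce (xb : E3) (r : ℝ) (hr : 0 < r) (n : E3) (hn : n ≠ 0)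
    (f : E3 → ℝ) (hf : Measurable f) (g : E3 → ℝ) (hg : Continuous g)
    (heven : ∀ x, g (-x) = g x)
    (hval : ∀ z : Metric.sphere (0 : E3) 1, f (xb + r • (z : E3)) = r⁻¹ ^ 3 * g (z : E3))
    (hzero : ∫ z : Metric.sphere (0 : E3) 1, g (z : E3) ∂(volume : Measure E3).toSphere = 0) :
    ∫ yb in {yb : E3 | 0 ≤ ⟪n, yb - xb⟫}, f yb ∂(sphereSurfaceMeasure xb r) = 0 := by
  set S := {yb : E3 | 0 ≤ ⟪n, yb - xb⟫} with hSdef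
  have hS : MeasurableSet S := by
    have : Continuous fun yb : E3 => ⟪n, yb - xb⟫ :=
      continuous_const.inner (continuous_id.sub continuous_const)
    exact this.measurable measurableSet_Ici
  set φ : Metric.sphere (0 : E3) 1 → E3 := fun z => xb + r • (z : E3) with hφdef
  have hφc : Continuous φ := continuous_const.add (continuous_subtype_val.const_smul r)
  have hpre : φ ⁻¹' S = {z : Metric.sphere (0 : E3) 1 | 0 ≤ ⟪n, (z : E3)⟫} := by
    ext z
    simp only [Set.mem_preimage, hSdef, Set.mem_setOf_eq, hφdef, add_sub_cancel_left,
      real_inner_smul_right]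
    constructor
    · intro h; nlinarith
    · intro h; exact mul_nonneg hr.le h
  rw [sphereSurfaceMeasure, Measure.restrict_smul, integral_smul_measure,
    setIntegral_map hS hf.aestronglyMeasurable hφc.aemeasurable, hpre]
  have : ∫ z in {z : Metric.sphere (0 : E3) 1 | 0 ≤ ⟪n, (z : E3)⟫}, f (φ z)
        ∂(volume : Measure E3).toSphere
      = ∫ z in {z : Metric.sphere (0 : E3) 1 | 0 ≤ ⟪n, (z : E3)⟫}, r⁻¹ ^ 3 * g (z : E3)
        ∂(volume : Measure E3).toSphere :=
    integral_congr_ae (Filter.Eventually.of_forall fun z => hval z)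
  rw [this, integral_const_mul, hemi_zero g hg heven hzero n hn, mul_zero, smul_zero]

end MuskatAux

/-- **Hemisphere cancellation for the Muskat kernels.**  For every center `x̄ ∈ ℝ³`, radius
`r > 0` and unit vector `n`, the kernels `(x₁-y₁)(x₃-y₃)/|x̄-ȳ|⁵` and
`(2(x₃-y₃)² - (x₁-y₁)² - (x₂-y₂)²)/|x̄-ȳ|⁵` have zero mean on the hemisphere
`{ȳ : |ȳ-x̄| = r, n ⬝ (ȳ-x̄) ≥ 0}` with respect to the surface measure of the sphere. -/
theorem muskat_kernels_hemisphere_cancellation (xb : E3) (r : ℝ) (hr : 0 < r)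
    (n : E3) (hn : ‖n‖ = 1) :
    (∫ yb in {yb : E3 | 0 ≤ ⟪n, yb - xb⟫},
        (xb 0 - yb 0) * (xb 2 - yb 2) / ‖xb - yb‖ ^ 5
        ∂(sphereSurfaceMeasure xb r)) = 0 ∧
    (∫ yb in {yb : E3 | 0 ≤ ⟪n, yb - xb⟫},
        (2 * (xb 2 - yb 2) ^ 2 - (xb 0 - yb 0) ^ 2 - (xb 1 - yb 1) ^ 2) / ‖xb - yb‖ ^ 5
        ∂(sphereSurfaceMeasure xb r)) = 0 := by

  have hn0 : n ≠ 0 := by intro h; rw [h] at hn; simp at hn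
  have hmi : ∀ i : Fin 3, Measurable fun yb : E3 => yb i :=
    fun i => ((EuclideanSpace.proj i).continuous).measurable
  have hmnorm : Measurable fun yb : E3 => ‖xb - yb‖ ^ 5 :=
    ((continuous_const.sub continuous_id).norm.pow 5).measurable
  have hnormval : ∀ z : Metric.sphere (0 : E3) 1, ‖xb - (xb + r • (z : E3))‖ = r := by
    intro z
    have h1 : xb - (xb + r • (z : E3)) = -(r • (z : E3)) := by abel
    rw [h1, norm_neg, norm_smul, mem_sphere_zero_iff_norm.mp z.2, Real.norm_eq_abs,
      abs_of_pos hr, mul_one]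
  have hcoord : ∀ (z : Metric.sphere (0 : E3) 1) (i : Fin 3),
      xb i - (xb + r • (z : E3)) i = -(r * (z : E3) i) := by
    intro z i
    simp only [PiLp.add_apply, PiLp.smul_apply, smul_eq_mul]
    ring
  constructor
  · apply MuskatAux.main_reduce xb r hr n hn0 _
      (((measurable_const.sub (hmi 0)).mul (measurable_const.sub (hmi 2))).div hmnorm)
      (fun x => x 0 * x 2)
      (((EuclideanSpace.proj (0 : Fin 3)).continuous).mul
        ((EuclideanSpace.proj (2 : Fin 3)).continuous))
      (fun x => by simp [PiLp.neg_apply])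
      (fun z => ?_) MuskatAux.sphere_int_zero1
    simp only [Pi.div_apply, Pi.mul_apply, Pi.sub_apply]
    rw [hcoord z 0, hcoord z 2, hnormval z]
    field_simp
  · apply MuskatAux.main_reduce xb r hr n hn0 _
      (((measurable_const.sub (hmi 2)).pow_const 2 |>.const_mul 2
          |>.sub ((measurable_const.sub (hmi 0)).pow_const 2)
          |>.sub ((measurable_const.sub (hmi 1)).pow_const 2)).div hmnorm)
      (fun x => 2 * (x 2) ^ 2 - (x 0) ^ 2 - (x 1) ^ 2)
      (((continuous_const.mul ((EuclideanSpace.proj (2 : Fin 3)).continuous.pow 2)).sub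
          ((EuclideanSpace.proj (0 : Fin 3)).continuous.pow 2)).sub
          ((EuclideanSpace.proj (1 : Fin 3)).continuous.pow 2))
      (fun x => by simp [PiLp.neg_apply])
      (fun z => ?_) MuskatAux.sphere_int_zero2
    simp only [Pi.div_apply, Pi.mul_apply, Pi.sub_apply]
    rw [hcoord z 0, hcoord z 1, hcoord z 2, hnormval z]
    field_simp
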